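/- Let E be a self-adjoint, positive, unital operator on the real Hilbert space of Hermitian operators on a finite-dimensional complex Hilbert space (with trace inner product) that moreover satisfies Tr[A E(A)] = ∫ f_A² ρ dμ ≥ 0 where f_A(x) = Tr[A Π(x)] with Π(x) rank-one projectors and ρ > 0. Then all eigenvalues of E lie in the interval (0,1], and 1 is an eigenvalue with eigenvector the identity operator. -/

import Mathlib

open Matrix MeasureTheory

attribute [local instance] Matrix.normedAddCommGroup Matrix.normedSpace

/-- The Berezin–Toeplitz quantum channel
`E(A) = ∫_X Tr[A Π(x)] Π(x) ρ(x) dμ(x)`. -/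
noncomputable def Ecal {n : ℕ} {X : Type*} [MeasurableSpace X] (μ : Measure X)
    (ρ : X → ℝ) (P : X → Matrix (Fin n) (Fin n) ℂ)
    (A : Matrix (Fin n) (Fin n) ℂ) : Matrix (Fin n) (Fin n) ℂ :=
  ∫ x, (A * P x).trace • ρ x • P x ∂μ

section Aux

variable {n : ℕ}

/-- Embedding of matrices into Euclidean space, to access the Frobenius inner product. -/
noncomputable def mv (B : Matrix (Fin n) (Fin n) ℂ) : EuclideanSpace ℂ (Fin n × Fin n) :=
  (WithLp.equiv 2 _).symm (fun p => B p.1 p.2)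

lemma mv_inner (B C : Matrix (Fin n) (Fin n) ℂ) :
    (inner ℂ (mv B) (mv C) : ℂ) = (Bᴴ * C).trace := by
  simp only [mv, PiLp.inner_apply, RCLike.inner_apply, WithLp.equiv_symm_apply, PiLp.toLp_apply,
    Matrix.trace, Matrix.diag, Matrix.mul_apply, Matrix.conjTranspose_apply]
  rw [Fintype.sum_prod_type]
  rw [Finset.sum_comm]
  exact Finset.sum_congr rfl fun _ _ => Finset.sum_congr rfl fun _ _ => mul_comm _ _

lemma mv_eq_zero {B : Matrix (Fin n) (Fin n) ℂ} (h : mv B = 0) : B = 0 := by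
  ext i j
  have := congrArg (fun v => v (i, j)) h
  simpa [mv] using this

/-- Cauchy–Schwarz for the Frobenius inner product. -/
lemma cs (B C : Matrix (Fin n) (Fin n) ℂ) :
    ‖(Bᴴ * C).trace‖ ^ 2 ≤ (Bᴴ * B).trace.re * (Cᴴ * C).trace.re := by
  have hB : (Bᴴ * B).trace.re = ‖mv B‖ ^ 2 := by
    rw [← mv_inner]
    simpa using inner_self_eq_norm_sq (𝕜 := ℂ) (mv B)
  have hC : (Cᴴ * C).trace.re = ‖mv C‖ ^ 2 := by
    rw [← mv_inner]
    simpa using inner_self_eq_norm_sq (𝕜 := ℂ) (mv C)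
  rw [hB, hC, ← mul_pow, ← mv_inner]
  exact pow_le_pow_left₀ (norm_nonneg _) (norm_inner_le_norm _ _) 2

/-- A rank-one idempotent complex matrix has trace `1`. -/
lemma trace_of_rank_one_proj (Q : Matrix (Fin n) (Fin n) ℂ)
    (hidem : Q * Q = Q) (hrank : Q.rank = 1) : Q.trace = 1 := by
  have hf : Q.mulVecLin ∘ₗ Q.mulVecLin = Q.mulVecLin := by
    rw [← Matrix.mulVecLin_mul, hidem]
  obtain ⟨p, hp⟩ := (LinearMap.isProj_iff_isIdempotentElem Q.mulVecLin).mpr hf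
  have hrange : p = LinearMap.range Q.mulVecLin := by
    apply le_antisymm
    · intro x hx
      exact ⟨x, hp.map_id x hx⟩
    · rintro _ ⟨x, rfl⟩
      exact hp.map_mem x
  have ht := hp.trace
  rw [LinearMap.trace_eq_matrix_trace ℂ (Pi.basisFun ℂ (Fin n)),
    LinearMap.toMatrix_eq_toMatrix'] at ht
  have hQ : LinearMap.toMatrix' Q.mulVecLin = Q := by
    rw [← Matrix.toLin'_apply']
    exact LinearMap.toMatrix'_toLin' Q
  rw [hQ] at ht
  rw [ht, hrange, Matrix.rank] at *
  rw [hrank]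
  norm_num

/-- `Tr[A Q]` is real for Hermitian `A`, `Q`. -/
lemma trace_mul_real {A Q : Matrix (Fin n) (Fin n) ℂ} (hA : A.IsHermitian)
    (hQ : Q.IsHermitian) : (((A * Q).trace.re : ℝ) : ℂ) = (A * Q).trace := by
  apply Complex.conj_eq_iff_re.mp
  have : (starRingEnd ℂ) (A * Q).trace = ((A * Q)ᴴ).trace := (Matrix.trace_conjTranspose _).symm
  rw [this, Matrix.conjTranspose_mul, hA.eq, hQ.eq, Matrix.trace_mul_comm]

/-- Pointwise Cauchy–Schwarz bound against a Hermitian idempotent. -/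
lemma key {A Q : Matrix (Fin n) (Fin n) ℂ} (hA : A.IsHermitian) (hQ : Q.IsHermitian)
    (hid : Q * Q = Q) : ‖(A * Q).trace‖ ^ 2 ≤ (A * A * Q).trace.re * Q.trace.re := by
  have h := cs (Q * A) Q
  have hBH : (Q * A)ᴴ = A * Q := by rw [Matrix.conjTranspose_mul, hA.eq, hQ.eq]
  rw [hBH] at h
  have h1 : A * Q * Q = A * Q := by rw [Matrix.mul_assoc, hid]
  have h2 : (A * Q * (Q * A)).trace = (A * A * Q).trace := by
    rw [← Matrix.mul_assoc, h1, Matrix.trace_mul_comm, ← Matrix.mul_assoc]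
  have h3 : Qᴴ * Q = Q := by rw [hQ.eq, hid]
  rw [h1, h2, h3] at h
  exact h

end Aux

/-- For the (injective) Berezin–Toeplitz quantum channel associated to a family of
rank-one orthogonal projectors with positive density satisfying the resolution of
identity: every eigenvalue of `E` on Hermitian matrices lies in `(0,1]`, and `1` is
an eigenvalue with eigenvector the identity. -/
theorem stmt4 {n : ℕ} {X : Type*} [MeasurableSpace X] (μ : Measure X)
    [IsFiniteMeasure μ]
    (ρ : X → ℝ) (hρ : ∀ x, 0 < ρ x)
    (P : X → Matrix (Fin n) (Fin n) ℂ)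
    (hHerm : ∀ x, (P x).IsHermitian)
    (hidem : ∀ x, P x * P x = P x)
    (hrank : ∀ x, (P x).rank = 1)
    (hint : ∀ A : Matrix (Fin n) (Fin n) ℂ,
      @Integrable _ PseudoMetricSpace.toUniformSpace.toTopologicalSpace _ _ _ (fun x => (A * P x).trace • ρ x • P x) μ)
    (hint0 : @Integrable _ PseudoMetricSpace.toUniformSpace.toTopologicalSpace _ _ _ (fun x => ρ x • P x) μ)
    (hres : ∫ x, ρ x • P x ∂μ = (1 : Matrix (Fin n) (Fin n) ℂ))
    (hinj : ∀ A : Matrix (Fin n) (Fin n) ℂ, A.IsHermitian → Ecal μ ρ P A = 0 → A = 0) :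
    Ecal μ ρ P 1 = 1 ∧
    ∀ (c : ℝ) (A : Matrix (Fin n) (Fin n) ℂ), A.IsHermitian → A ≠ 0 →
      Ecal μ ρ P A = (c : ℂ) • A → 0 < c ∧ c ≤ 1 := by
  have htrP : ∀ x, (P x).trace = 1 := fun x => trace_of_rank_one_proj _ (hidem x) (hrank x)
  constructor
  · have hs : ∀ x, ((1 : Matrix (Fin n) (Fin n) ℂ) * P x).trace • ρ x • P x = ρ x • P x := by
      intro x
      rw [one_mul, htrP x, one_smul]
    simp only [Ecal, hs]
    exact hres
  · intro c A hA hA0 hEig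
    -- the continuous linear functional `B ↦ Tr[M B]`
    set L : Matrix (Fin n) (Fin n) ℂ → (Matrix (Fin n) (Fin n) ℂ →L[ℂ] ℂ) :=
      fun M => LinearMap.toContinuousLinearMap
        ((Matrix.traceLinearMap (Fin n) ℂ ℂ).comp (LinearMap.mulLeft ℂ M)) with hLdef
    have hLapp : ∀ M B, L M B = (M * B).trace := fun M B => rfl
    set t : X → ℂ := fun x => (A * P x).trace with htdef
    set r : X → ℝ := fun x => (t x).re with hrdef
    have htreal : ∀ x, ((r x : ℝ) : ℂ) = t x := fun x => trace_mul_real hA (hHerm x)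
    -- value of the functional on the integrand
    have hgx : ∀ x, L A ((A * P x).trace • ρ x • P x) = ((ρ x * r x ^ 2 : ℝ) : ℂ) := by
      intro x
      rw [hLapp]
      rw [Matrix.mul_smul, Matrix.mul_smul, Matrix.trace_smul, Matrix.trace_smul]
      show t x • ρ x • t x = ((ρ x * r x ^ 2 : ℝ) : ℂ)
      rw [smul_eq_mul, Complex.real_smul, ← htreal x]
      push_cast
      ring
    -- trace of A*A
    have hAAH : (A * A).IsHermitian := by
      show (A * A)ᴴ = A * A
      rw [Matrix.conjTranspose_mul, hA.eq]
    have hAA : (A * A).trace = ((‖mv A‖ ^ 2 : ℝ) : ℂ) := by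
      have h' : (A * A).trace = (Aᴴ * A).trace := by rw [hA.eq]
      rw [h', ← mv_inner, inner_self_eq_norm_sq_to_K]
      norm_num
    set S : ℝ := ‖mv A‖ ^ 2 with hSdef
    have hSpos : 0 < S := by
      have : mv A ≠ 0 := fun h => hA0 (mv_eq_zero h)
      have := norm_pos_iff.mpr this
      positivity
    -- main identity : c * S = ∫ ρ r²
    have hcomm := (L A).integral_comp_comm (hint A)
    rw [show (∫ x, (A * P x).trace • ρ x • P x ∂μ) = Ecal μ ρ P A from rfl, hEig] at hcomm
    have hLc : L A ((c : ℂ) • A) = ((c * S : ℝ) : ℂ) := by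
      rw [_root_.map_smul, hLapp, smul_eq_mul, hAA]
      push_cast
      ring
    replace hcomm := hcomm.trans hLc
    have hIc : (∫ x, L A ((A * P x).trace • ρ x • P x) ∂μ) = ((∫ x, ρ x * r x ^ 2 ∂μ : ℝ) : ℂ) := by
      rw [show (fun x => L A ((A * P x).trace • ρ x • P x)) = fun x => ((ρ x * r x ^ 2 : ℝ) : ℂ)
        from funext hgx]
      exact integral_ofReal
    replace hcomm := hIc.symm.trans hcomm
    have hkey : c * S = ∫ x, ρ x * r x ^ 2 ∂μ := by
      exact_mod_cast hcomm.symm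
    have hI1nonneg : 0 ≤ ∫ x, ρ x * r x ^ 2 ∂μ :=
      integral_nonneg fun x => mul_nonneg (hρ x).le (sq_nonneg _)
    -- c ≠ 0
    have hc0 : c ≠ 0 := by
      intro h
      subst h
      apply hA0
      apply hinj A hA
      rw [hEig]
      simp
    have hcnonneg : 0 ≤ c := by
      by_contra h
      push_neg at h
      nlinarith
    have hcpos : 0 < c := lt_of_le_of_ne hcnonneg (Ne.symm hc0)
    refine ⟨hcpos, ?_⟩
    -- upper bound: ∫ ρ r² ≤ S
    have h1int : Integrable (fun x => ρ x * r x ^ 2) μ := by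
      have := ((L A).integrable_comp (hint A)).re
      refine this.congr ?_
      filter_upwards with x
      refine (congrArg RCLike.re (hgx x)).trans ?_
      simp only [RCLike.re_to_complex, Complex.ofReal_re]
    have h2x : ∀ x, L (A * A) (ρ x • P x) = ((ρ x * (A * A * P x).trace.re : ℝ) : ℂ) := by
      intro x
      rw [hLapp, Matrix.mul_smul, Matrix.trace_smul, Complex.real_smul]
      conv_lhs => rw [← trace_mul_real hAAH (hHerm x)]
      push_cast
      ring
    have h2int : Integrable (fun x => ρ x * (A * A * P x).trace.re) μ := by
      have := ((L (A * A)).integrable_comp hint0).re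
      refine this.congr ?_
      filter_upwards with x
      refine (congrArg RCLike.re (h2x x)).trans ?_
      simp [RCLike.re_to_complex]
    have hmono : ∀ x, ρ x * r x ^ 2 ≤ ρ x * (A * A * P x).trace.re := by
      intro x
      apply mul_le_mul_of_nonneg_left _ (hρ x).le
      have hk := key hA (hHerm x) (hidem x)
      rw [htrP x] at hk
      simp only [Complex.one_re, mul_one] at hk
      calc r x ^ 2 = ‖t x‖ ^ 2 := by
            rw [← htreal x, Complex.norm_real, Real.norm_eq_abs, sq_abs]
        _ ≤ (A * A * P x).trace.re := hk
    have hI2 : (∫ x, ρ x * (A * A * P x).trace.re ∂μ) = S := by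
      have hc2 := (L (A * A)).integral_comp_comm hint0
      rw [hres] at hc2
      replace hc2 := hc2.trans ((hLapp _ _).trans (by rw [mul_one, hAA]))
      have : (∫ x, L (A * A) (ρ x • P x) ∂μ)
          = ((∫ x, ρ x * (A * A * P x).trace.re ∂μ : ℝ) : ℂ) := by
        rw [show (fun x => L (A * A) (ρ x • P x))
            = fun x => ((ρ x * (A * A * P x).trace.re : ℝ) : ℂ) from funext h2x]
        exact integral_ofReal
      replace hc2 := this.symm.trans hc2
      exact_mod_cast hc2
    have hle : (∫ x, ρ x * r x ^ 2 ∂μ) ≤ S := by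
      rw [← hI2]
      exact integral_mono h1int h2int hmono
    nlinarith
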